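/- Every word of length n over any alphabet contains at most n+1 distinct palindromic factors (including the empty word). -/

import Mathlib

private lemma factorSet_finite {α : Type*} (u : List α) :
    {p : List α | p <:+: u ∧ p.Palindrome}.Finite := by
  apply Set.Finite.subset (List.finite_toSet u.sublists)
  intro p hp
  simpa [List.mem_sublists] using hp.1.sublist

private lemma infix_concat {α : Type*} {p w : List α} {a : α}
    (h : p <:+: w ++ [a]) : p <:+: w ∨ p <:+ (w ++ [a]) := by
  obtain ⟨s, t, hst⟩ := h
  rcases List.eq_nil_or_concat t with rfl | ⟨t', b, rfl⟩
  · right; exact ⟨s, by simpa using hst⟩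
  · left
    simp only [List.concat_eq_append, ← List.append_assoc] at hst
    obtain ⟨h1, -⟩ := List.append_inj' hst (by simp)
    exact ⟨s, t', by simpa [List.append_assoc] using h1⟩

private lemma suffix_of_suffix_length_le {α : Type*} {p q l : List α}
    (hp : p <:+ l) (hq : q <:+ l) (h : p.length ≤ q.length) : p <:+ q := by
  rw [← List.reverse_prefix] at hp hq ⊢
  exact List.prefix_of_prefix_length_le hp hq (by simpa)

/-- Every word of length `n` contains at most `n + 1` distinct palindromic
factors (including the empty word). -/
theorem palindromic_factors_card_le {α : Type*} (u : List α) :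
    {p : List α | p <:+: u ∧ p.Palindrome}.ncard ≤ u.length + 1 := by
  induction u using List.reverseRecOn with
  | nil =>
      have : {p : List α | p <:+: ([] : List α) ∧ p.Palindrome} = {[]} := by
        ext p
        simp only [Set.mem_setOf_eq, Set.mem_singleton_iff, List.infix_nil]
        exact ⟨fun h => h.1, fun h => ⟨h, h ▸ List.Palindrome.nil⟩⟩
      rw [this]; simp
  | append_singleton w a ih =>
      -- the set of palindromic suffixes of w ++ [a]
      set T : Set (List α) := {p | p <:+ (w ++ [a]) ∧ p.Palindrome} with hT
      have hTfin : T.Finite := by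
        apply Set.Finite.subset (factorSet_finite (w ++ [a]))
        intro p hp; exact ⟨hp.1.isInfix, hp.2⟩
      have hTne : T.Nonempty := ⟨[], List.nil_suffix, List.Palindrome.nil⟩
      obtain ⟨q, hqT, hqmax⟩ :=
        Set.Finite.exists_maximalFor (fun p => p.length) T hTfin hTne
      have hsub : {p : List α | p <:+: (w ++ [a]) ∧ p.Palindrome} ⊆
          {p : List α | p <:+: w ∧ p.Palindrome} ∪ {q} := by
        rintro p ⟨hinf, hpal⟩
        rcases infix_concat hinf with h | hsuf
        · exact Or.inl ⟨h, hpal⟩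
        · -- p is a palindromic suffix
          have hpT : p ∈ T := ⟨hsuf, hpal⟩
          have hle : p.length ≤ q.length := by
            by_contra hlt
            push_neg at hlt
            have : p.length ≤ q.length := hqmax (j := p) hpT hlt.le
            omega
          rcases eq_or_lt_of_le hle with heq | hlt
          · -- equal length suffixes are equal
            right
            have hpq : p <:+ q := suffix_of_suffix_length_le hsuf hqT.1 hle
            have hpre : p.reverse <+: q.reverse := List.reverse_prefix.mpr hpq
            have := List.IsPrefix.eq_of_length hpre (by simpa using heq)
            simpa using congrArg List.reverse this
          · -- p is a proper suffix of q, hence a prefix of q, so it occurs in w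
            left
            have hpq : p <:+ q := suffix_of_suffix_length_le hsuf hqT.1 hlt.le
            have hpre : p <+: q := by
              have : p.reverse <+: q.reverse := List.reverse_prefix.mpr hpq
              rwa [hpal.reverse_eq, hqT.2.reverse_eq] at this
            obtain ⟨r, hr⟩ := hpre
            obtain ⟨s, hs⟩ := hqT.1
            rcases List.eq_nil_or_concat r with rfl | ⟨r', b, rfl⟩
            · simp only [List.append_nil] at hr
              subst hr
              exact absurd hlt (lt_irrefl _)
            · refine ⟨⟨s, r', ?_⟩, hpal⟩
              rw [← hr] at hs
              simp only [List.concat_eq_append, ← List.append_assoc] at hs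
              obtain ⟨h1, -⟩ := List.append_inj' hs (by simp)
              simpa [List.append_assoc] using h1
      calc {p : List α | p <:+: (w ++ [a]) ∧ p.Palindrome}.ncard
          ≤ ({p : List α | p <:+: w ∧ p.Palindrome} ∪ {q}).ncard :=
            Set.ncard_le_ncard hsub ((factorSet_finite w).union (Set.finite_singleton q))
        _ ≤ {p : List α | p <:+: w ∧ p.Palindrome}.ncard + 1 := by
            simpa using Set.ncard_union_le _ {q}
        _ ≤ (w ++ [a]).length + 1 := by simp; omega
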